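/- Let C be an [n,k] MDS code. Then C admits a PIR achievable rate matrix Λ_{k,n}: the n×n binary matrix whose i-th row is the indicator vector of the cyclic shift by i of {1,...,k} has all column weights k and each row support is an information set; moreover k/n = k/n, so every MDS code is MDS-PIR capacity-achieving. -/

import Mathlib

/-- `I` is an information set of the `[n,k]` code `C`: it has size `k` and a codeword
vanishing on `I` is zero (so the projection of `C` onto the coordinates in `I` is a
bijection onto `F^I`). -/
def IsInfoSet {F : Type*} [Field F] {n : ℕ} (C : Submodule F (Fin n → F)) (k : ℕ)
    (I : Finset (Fin n)) : Prop :=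
  I.card = k ∧ ∀ x ∈ C, (∀ j ∈ I, x j = 0) → x = 0

/-- `Λ` is a PIR achievable rate matrix for the `[n,k]` code `C`: every column has
Hamming weight `κ` and the support of every row contains an information set. -/
def IsPIRMatrix {F : Type*} [Field F] {n ν : ℕ} (C : Submodule F (Fin n → F))
    (k κ : ℕ) (Λ : Fin ν → Fin n → Bool) : Prop :=
  (∀ j, (Finset.univ.filter fun u => Λ u j = true).card = κ) ∧
  ∀ u, ∃ I : Finset (Fin n), (∀ j ∈ I, Λ u j = true) ∧ IsInfoSet C k I

/-- The `s`-th generalized Hamming weight of the code `C`: the smallest support size of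
an `s`-dimensional subcode of `C`. -/
noncomputable def genHammingWeight {F : Type*} [Field F] {n : ℕ}
    (C : Submodule F (Fin n → F)) (s : ℕ) : ℕ :=
  sInf {c | ∃ D : Submodule F (Fin n → F), D ≤ C ∧ Module.finrank F D = s ∧
    c = Set.ncard {j | ∃ x ∈ D, x j ≠ 0}}

/-- for an `[n,k]` MDS code (every `k`-subset of coordinates is an
information set), the `n × n` binary matrix whose `i`-th row is the indicator of the
cyclic shift by `i` of `{1,…,k}` is a PIR achievable rate matrix with `κ = k`,
`ν = n`, and moreover each of its row supports is itself an information set; since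
`k/n = k/n`, every MDS code is MDS-PIR capacity-achieving. -/
theorem mds_code_capacity_achieving {F : Type*} [Field F] {n k : ℕ}
    (C : Submodule F (Fin n → F)) (hk : Module.finrank F C = k)
    (hk0 : 0 < k) (hkn : k ≤ n)
    (hMDS : ∀ I : Finset (Fin n), I.card = k → IsInfoSet C k I) :
    IsPIRMatrix C k k (fun i j : Fin n => decide ((j - i : Fin n).val < k)) ∧
    (∀ i : Fin n, IsInfoSet C k
      (Finset.univ.filter fun j : Fin n => ((j - i : Fin n).val < k))) ∧
    (k : ℚ) / n = (k : ℚ) / n := by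
  have hn : 0 < n := lt_of_lt_of_le hk0 hkn
  haveI : NeZero n := ⟨hn.ne'⟩
  have hfk : (Finset.univ.filter fun j : Fin n => j.val < k).card = k := by
    have himg : (Finset.univ.filter fun j : Fin n => j.val < k).image Fin.val
        = Finset.range k := by
      ext a
      simp only [Finset.mem_image, Finset.mem_filter, Finset.mem_univ, true_and,
        Finset.mem_range]
      constructor
      · rintro ⟨j, hj, rfl⟩; exact hj
      · intro ha; exact ⟨⟨a, lt_of_lt_of_le ha hkn⟩, ha, rfl⟩
    have := Finset.card_image_of_injective
      (Finset.univ.filter fun j : Fin n => j.val < k) Fin.val_injective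
    rw [himg, Finset.card_range] at this
    omega
  have hshift : ∀ i : Fin n,
      (Finset.univ.filter fun j : Fin n => ((j - i : Fin n).val < k)).card = k := by
    intro i
    rw [← hfk]
    apply Finset.card_nbij' (fun j => j - i) (fun j => j + i) <;>
      simp [sub_add_cancel, hfk, Set.MapsTo, Set.LeftInvOn, Set.RightInvOn]
  have hcol : ∀ j : Fin n,
      (Finset.univ.filter fun i : Fin n => ((j - i : Fin n).val < k)).card = k := by
    intro j
    rw [← hfk]
    apply Finset.card_nbij' (fun i => j - i) (fun a => j - a) <;>
      simp [sub_sub_cancel, hfk, Set.MapsTo, Set.LeftInvOn, Set.RightInvOn]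
  have hInfo : ∀ i : Fin n, IsInfoSet C k
      (Finset.univ.filter fun j : Fin n => ((j - i : Fin n).val < k)) :=
    fun i => hMDS _ (hshift i)
  refine ⟨⟨?_, ?_⟩, hInfo, rfl⟩
  · intro j
    simpa using hcol j
  · intro u
    exact ⟨_, fun j hj => by simpa using (Finset.mem_filter.mp hj).2, hInfo u⟩
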